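/- Let A be a local ring with maximal ideal m, and let p₁, …, p_r ∈ A[X] be monic polynomials whose reductions modulo m are pairwise coprime in (A/m)[X]. Then the natural ring homomorphism A[X]/(p₁⋯p_r) → ∏ᵢ A[X]/(pᵢ) is an isomorphism. -/

import Mathlib

open Polynomial IsLocalRing

/-- If a polynomial over a local ring reduces to zero mod the maximal ideal, its image in
`AdjoinRoot p` lies in `m • ⊤`. -/
private lemma mk_mem_smul_top {A : Type*} [CommRing A] [IsLocalRing A] (p g : Polynomial A)
    (hg : g.map (residue A) = 0) :
    AdjoinRoot.mk p g ∈
      (maximalIdeal A) • (⊤ : Submodule A (AdjoinRoot p)) := by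
  have hcoeff : ∀ n, g.coeff n ∈ maximalIdeal A := by
    intro n
    have := congrArg (fun q => Polynomial.coeff q n) hg
    simp only [Polynomial.coeff_map, Polynomial.coeff_zero] at this
    exact Ideal.Quotient.eq_zero_iff_mem.mp this
  have : g = g.sum fun n a => Polynomial.C a * Polynomial.X ^ n := (Polynomial.as_sum_support g).trans rfl |>.symm ▸ g.sum_C_mul_X_pow_eq.symm
  rw [← g.sum_C_mul_X_pow_eq]
  rw [Polynomial.sum]
  rw [map_sum]
  refine Submodule.sum_mem _ fun n _ => ?_
  have : (AdjoinRoot.mk p) (Polynomial.C (g.coeff n) * Polynomial.X ^ n)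
      = (g.coeff n) • (AdjoinRoot.mk p (Polynomial.X ^ n)) := by
    rw [map_mul, Algebra.smul_def]
    rfl
  rw [this]
  exact Submodule.smul_mem_smul (hcoeff n) Submodule.mem_top

/-- Coprimality of monic polynomials over a local ring can be detected on residues. -/
private lemma isCoprime_of_residue {A : Type*} [CommRing A] [IsLocalRing A]
    {p q : Polynomial A} (hp : p.Monic)
    (h : IsCoprime (p.map (residue A)) (q.map (residue A))) : IsCoprime p q := by
  -- work in B = A[X]/(p)
  have : Module.Finite A (AdjoinRoot p) :=
    Module.Finite.of_basis (AdjoinRoot.powerBasis' hp).basis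
  obtain ⟨u', v', huv⟩ := h
  obtain ⟨u, rfl⟩ := Polynomial.map_surjective _ Ideal.Quotient.mk_surjective u'
  obtain ⟨v, rfl⟩ := Polynomial.map_surjective _ Ideal.Quotient.mk_surjective v'
  set J : Ideal (AdjoinRoot p) := Ideal.span {AdjoinRoot.mk p q}
  have key : (⊤ : Submodule A (AdjoinRoot p)) ≤
      (J.restrictScalars A) ⊔ (maximalIdeal A) • (⊤ : Submodule A (AdjoinRoot p)) := by
    rintro b -
    obtain ⟨f, rfl⟩ := AdjoinRoot.mk_surjective (g := p) b
    have hc : (f * (1 - (u * p + v * q))).map (residue A) = 0 := by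
      rw [Polynomial.map_mul]
      have : ((1 : Polynomial A) - (u * p + v * q)).map (residue A) = 0 := by
        simp only [Polynomial.map_sub, Polynomial.map_add, Polynomial.map_mul,
          Polynomial.map_one]
        have huv' : u.map (residue A) * p.map (residue A)
            + v.map (residue A) * q.map (residue A) = 1 := huv
        linear_combination -huv'
      rw [this, mul_zero]
    have hsplit : AdjoinRoot.mk p f
        = AdjoinRoot.mk p (f * v * q) + AdjoinRoot.mk p (f * (1 - (u * p + v * q))) := by
      rw [← map_add]
      apply AdjoinRoot.mk_eq_mk.mpr
      refine ⟨f * u, by ring⟩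
    rw [hsplit]
    refine Submodule.add_mem _ (Submodule.mem_sup_left ?_) (Submodule.mem_sup_right ?_)
    · show AdjoinRoot.mk p (f * v * q) ∈ J
      rw [map_mul]
      exact Ideal.mul_mem_left _ _ (Ideal.subset_span rfl)
    · exact mk_mem_smul_top p _ hc
  have htop : (⊤ : Submodule A (AdjoinRoot p)) ≤ J.restrictScalars A :=
    Submodule.le_of_le_smul_of_le_jacobson_bot Module.Finite.fg_top
      (maximalIdeal_le_jacobson ⊥) key
  have hJ : J = ⊤ := by
    rw [eq_top_iff]; intro x _; exact htop Submodule.mem_top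
  -- extract the coprimality witnesses
  have h1 : (1 : AdjoinRoot p) ∈ J := hJ ▸ Submodule.mem_top
  rw [Ideal.mem_span_singleton'] at h1
  obtain ⟨w', hw⟩ := h1
  obtain ⟨w, rfl⟩ := AdjoinRoot.mk_surjective (g := p) w'
  rw [← map_mul, ← map_one (AdjoinRoot.mk p), AdjoinRoot.mk_eq_mk] at hw
  obtain ⟨u₀, hu₀⟩ := hw
  exact ⟨-u₀, w, by linear_combination hu₀⟩

set_option maxHeartbeats 1000000 in
/-- CRT for monic polynomials over a local ring whose reductions are pairwise coprime:
the natural map `A[X]/(p₁⋯p_r) → ∏ᵢ A[X]/(pᵢ)` is an isomorphism. -/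
theorem stmt_3 {A : Type*} [CommRing A] [IsLocalRing A] {r : ℕ}
    (p : Fin r → Polynomial A) (hmonic : ∀ i, (p i).Monic)
    (hcop : ∀ i j, i ≠ j →
      IsCoprime ((p i).map (IsLocalRing.residue A)) ((p j).map (IsLocalRing.residue A))) :
    Function.Bijective
      (Pi.ringHom (fun i =>
        Ideal.Quotient.factor (S := Ideal.span {∏ j, p j}) (T := Ideal.span {p i})
          (Ideal.span_singleton_le_span_singleton.mpr
            (Finset.dvd_prod_of_mem p (Finset.mem_univ i))))) := by
  have hcop' : ∀ i j, i ≠ j → IsCoprime (p i) (p j) :=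
    fun i j hij => isCoprime_of_residue (hmonic i) (hcop i j hij)
  have hspan : ⨅ i, Ideal.span {p i} = Ideal.span {∏ i, p i} :=
    Ideal.iInf_span_singleton hcop'
  have hpair : Pairwise (Function.onFun IsCoprime fun i => Ideal.span {p i}) := fun i j hij =>
    (Ideal.isCoprime_span_singleton_iff _ _).mpr (hcop' i j hij)
  have key : (Pi.ringHom (fun i =>
        Ideal.Quotient.factor (S := Ideal.span {∏ j, p j}) (T := Ideal.span {p i})
          (Ideal.span_singleton_le_span_singleton.mpr
            (Finset.dvd_prod_of_mem p (Finset.mem_univ i)))))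
      = (Ideal.quotientInfToPiQuotient (fun i => Ideal.span {p i})).comp
          (Ideal.quotEquivOfEq hspan.symm).toRingHom := by
    apply RingHom.ext
    intro x
    obtain ⟨y, rfl⟩ := Ideal.Quotient.mk_surjective x
    funext i
    rw [Pi.ringHom, RingHom.pi_apply, Ideal.Quotient.factor_mk, RingHom.comp_apply,
      RingEquiv.toRingHom_eq_coe, RingEquiv.coe_toRingHom, Ideal.quotEquivOfEq_mk,
      Ideal.quotientInfToPiQuotient_mk']
  rw [key, RingHom.coe_comp]
  apply Function.Bijective.comp
  · exact ⟨Ideal.quotientInfToPiQuotient_inj _, Ideal.quotientInfToPiQuotient_surj hpair⟩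
  · exact (Ideal.quotEquivOfEq hspan.symm).bijective
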